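/- Let P and Q be probability measures on X with P ≪ Q and g₀ a measurable version of dP/dQ. Let M_l, M_u > 0, and let g, gₙ, g₀ : X → (0,∞) be measurable functions with 1/M_l ≤ g(x) ≤ M_u, 1/M_l ≤ gₙ(x) ≤ M_u, and 1/M_l ≤ g₀(x) ≤ M_u for all x. Write h_Q(u,v)² = ∫ (√u − √v)² dQ, and set c_M = 1/(4 M_l M_u). If h_Q(gₙ, g₀) ≤ c_M · h_Q(g, gₙ), then ∫ (gₙ^{−1/2} − g^{−1/2}) dP + ∫ (gₙ^{1/2} − g^{1/2}) dQ ≤ − (1/(2√M_u)) · h_Q(g, gₙ)²; equivalently, writing D(u) = ∫ u^{−1/2} dP + ∫ u^{1/2} dQ for the (unnormalized) balancing loss, D(g) − D(gₙ) ≥ (1/(2√M_u)) h_Q(g,gₙ)². -/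

import Mathlib

open MeasureTheory
open scoped ENNReal

lemma sieve_ptwise (s t a b c : ℝ) (hs : 0 < s) (ht : 0 < t)
    (ha : 1/t ≤ a) (ha' : a ≤ s) (hb : 1/t ≤ b) (hb' : b ≤ s)
    (hc : 1/t ≤ c) (hc' : c ≤ s) :
    c^2 * (b⁻¹ - a⁻¹) + (b - a) ≤ 4*t^4*s^3*(b-c)^2 - 3/(4*s)*(a-b)^2 := by
  have ha0 : 0 < a := lt_of_lt_of_le (by positivity) ha
  have hb0 : 0 < b := lt_of_lt_of_le (by positivity) hb
  have hc0 : 0 < c := lt_of_lt_of_le (by positivity) hc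
  have hid : c^2 * (b⁻¹ - a⁻¹) + (b - a)
      = ((a-b)*(c-b))*((c+b)/(a*b)) - (a-b)^2/a := by
    field_simp
    ring
  rw [hid]
  have hab : 1/t^2 ≤ a*b := by
    calc 1/t^2 = (1/t)*(1/t) := by ring
    _ ≤ a*b := mul_le_mul ha hb (by positivity) (le_trans (by positivity) ha)
  have habpos : 0 < a*b := by positivity
  have hYle : (c+b)/(a*b) ≤ 2*s*t^2 := by
    calc (c+b)/(a*b) ≤ (2*s)/(1/t^2) :=
      div_le_div₀ (by positivity) (by linarith) (by positivity) hab
    _ = 2*s*t^2 := by field_simp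
  have h2 : (a-b)*(c-b) ≤ |a - b| * |c - b| := by
    rw [← abs_mul]; exact le_abs_self _
  have h1 : ((a-b)*(c-b))*((c+b)/(a*b)) ≤ (|a - b| * |c - b|)*(2*s*t^2) :=
    mul_le_mul h2 hYle (by positivity) (by positivity)
  have h3 : (|a - b| * |c - b|)*(2*s*t^2) ≤ ((a-b)^2 + 16*t^4*s^4*(b-c)^2)/(4*s) := by
    rw [le_div_iff₀ (by positivity)]
    calc (|a - b| * |c - b|)*(2*s*t^2)*(4*s) ≤ |a - b|^2 + 16*t^4*s^4*|c - b|^2 := by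
          nlinarith [sq_nonneg (|a - b| - 4*t^2*s^2*|c - b|)]
    _ = (a-b)^2 + 16*t^4*s^4*(b-c)^2 := by rw [sq_abs, sq_abs]; ring
  have h4 : (a-b)^2/s ≤ (a-b)^2/a :=
    div_le_div_of_nonneg_left (sq_nonneg _) ha0 ha'
  have h5 : ((a-b)^2 + 16*t^4*s^4*(b-c)^2)/(4*s)
      = (a-b)^2/(4*s) + 4*t^4*s^3*(b-c)^2 := by
    field_simp; ring
  have h6 : (a-b)^2/(4*s) + 4*t^4*s^3*(b-c)^2 - (a-b)^2/s
      = 4*t^4*s^3*(b-c)^2 - 3/(4*s)*(a-b)^2 := by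
    field_simp; ring
  linarith

lemma integral_P_eq_mul {X : Type*} [MeasurableSpace X] (P Q : Measure X)
    [IsFiniteMeasure P] [IsFiniteMeasure Q] (hPQ : P ≪ Q) (g0 : X → ℝ) (hg0m : Measurable g0)
    (hg0nn : ∀ x, 0 ≤ g0 x)
    (hver : ∀ᵐ x ∂Q, ENNReal.ofReal (g0 x) = P.rnDeriv Q x)
    (f : X → ℝ) :
    ∫ x, f x ∂P = ∫ x, g0 x * f x ∂Q := by
  have hP : P = Q.withDensity (fun x => ((g0 x).toNNReal : ℝ≥0∞)) := by
    rw [show (fun x => ((g0 x).toNNReal : ℝ≥0∞)) = fun x => ENNReal.ofReal (g0 x) from rfl,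
      withDensity_congr_ae hver, Measure.withDensity_rnDeriv_eq P Q hPQ]
  rw [hP, integral_withDensity_eq_integral_smul (hg0m.real_toNNReal) f]
  congr 1
  ext x
  simp [NNReal.smul_def, Real.coe_toNNReal _ (hg0nn x)]


/-- Lemma 3 of the paper: Let `g₀ = dP/dQ` be the true density ratio
and `g, gₙ, g₀` all take values in `[1/M_l, M_u]`. Writing
`h_Q(u,v) = (∫ (√u − √v)² dQ)^{1/2}` and `c_M = 1/(4 M_l M_u)`, if
`h_Q(gₙ, g₀) ≤ c_M · h_Q(g, gₙ)`, then
`∫ (gₙ^{−1/2} − g^{−1/2}) dP + ∫ (gₙ^{1/2} − g^{1/2}) dQ ≤ −(1/(2√M_u)) h_Q(g,gₙ)²`;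
equivalently, with `D(u) = ∫ u^{−1/2} dP + ∫ u^{1/2} dQ` the unnormalized balancing
loss, `D(g) − D(gₙ) ≥ (1/(2√M_u)) h_Q(g,gₙ)²`. -/
theorem sieve_condition_one {X : Type*} [MeasurableSpace X]
    (P Q : Measure X) [IsProbabilityMeasure P] [IsProbabilityMeasure Q]
    (hPQ : P ≪ Q)
    (g gn g0 : X → ℝ)
    (hgm : Measurable g) (hgnm : Measurable gn) (hg0m : Measurable g0)
    (hver : ∀ᵐ x ∂Q, ENNReal.ofReal (g0 x) = P.rnDeriv Q x)
    (Ml Mu : ℝ) (hMl : 0 < Ml) (hMu : 0 < Mu)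
    (hg : ∀ x, 1 / Ml ≤ g x ∧ g x ≤ Mu)
    (hgn : ∀ x, 1 / Ml ≤ gn x ∧ gn x ≤ Mu)
    (hg0 : ∀ x, 1 / Ml ≤ g0 x ∧ g0 x ≤ Mu)
    (hclose : Real.sqrt (∫ x, (Real.sqrt (gn x) - Real.sqrt (g0 x)) ^ 2 ∂Q)
        ≤ (1 / (4 * Ml * Mu)) *
          Real.sqrt (∫ x, (Real.sqrt (g x) - Real.sqrt (gn x)) ^ 2 ∂Q)) :
    ((∫ x, ((Real.sqrt (gn x))⁻¹ - (Real.sqrt (g x))⁻¹) ∂P)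
        + ∫ x, (Real.sqrt (gn x) - Real.sqrt (g x)) ∂Q
      ≤ -(1 / (2 * Real.sqrt Mu)) *
          ∫ x, (Real.sqrt (g x) - Real.sqrt (gn x)) ^ 2 ∂Q)
    ∧ ((∫ x, (Real.sqrt (g x))⁻¹ ∂P) + (∫ x, Real.sqrt (g x) ∂Q)
        - ((∫ x, (Real.sqrt (gn x))⁻¹ ∂P) + ∫ x, Real.sqrt (gn x) ∂Q)
      ≥ (1 / (2 * Real.sqrt Mu)) *
          ∫ x, (Real.sqrt (g x) - Real.sqrt (gn x)) ^ 2 ∂Q) := by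
  set s := Real.sqrt Mu with hs_def
  set t := Real.sqrt Ml with ht_def
  have hs : 0 < s := Real.sqrt_pos.mpr hMu
  have ht : 0 < t := Real.sqrt_pos.mpr hMl
  have hs2 : s^2 = Mu := Real.sq_sqrt hMu.le
  have ht2 : t^2 = Ml := Real.sq_sqrt hMl.le
  set A : X → ℝ := fun x => Real.sqrt (g x) with hA_def
  set B : X → ℝ := fun x => Real.sqrt (gn x) with hB_def
  set C : X → ℝ := fun x => Real.sqrt (g0 x) with hC_def
  have hAm : Measurable A := hgm.sqrt
  have hBm : Measurable B := hgnm.sqrt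
  have hCm : Measurable C := hg0m.sqrt
  have hbd : ∀ (f : X → ℝ), (∀ x, 1 / Ml ≤ f x ∧ f x ≤ Mu) →
      ∀ x, 1/t ≤ Real.sqrt (f x) ∧ Real.sqrt (f x) ≤ s := by
    intro f hf x
    constructor
    · rw [ht_def, one_div, ← Real.sqrt_inv]
      exact Real.sqrt_le_sqrt (by rw [← one_div]; exact (hf x).1)
    · exact Real.sqrt_le_sqrt (hf x).2
  have hA := hbd g hg
  have hB := hbd gn hgn
  have hC := hbd g0 hg0
  have hApos : ∀ x, 0 < A x := fun x => lt_of_lt_of_le (by positivity) (hA x).1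
  have hBpos : ∀ x, 0 < B x := fun x => lt_of_lt_of_le (by positivity) (hB x).1
  have hg0nn : ∀ x, 0 ≤ g0 x := fun x => le_trans (by positivity) (hg0 x).1
  have hC2 : ∀ x, (C x)^2 = g0 x := fun x => Real.sq_sqrt (hg0nn x)
  -- integrability of bounded measurable functions
  have ibdd : ∀ (μ : Measure X), IsFiniteMeasure μ → ∀ (f : X → ℝ) (Cst : ℝ),
      Measurable f → (∀ x, |f x| ≤ Cst) → Integrable f μ := by
    intro μ hμ f Cst hm hb
    exact Integrable.mono' (integrable_const Cst) hm.aestronglyMeasurable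
      (ae_of_all _ fun x => hb x)
  -- key rewriting of the P-integral
  have keyP : ∫ x, ((B x)⁻¹ - (A x)⁻¹) ∂P = ∫ x, g0 x * ((B x)⁻¹ - (A x)⁻¹) ∂Q :=
    integral_P_eq_mul P Q hPQ g0 hg0m hg0nn hver _
  -- integrands over Q
  set F : X → ℝ := fun x => g0 x * ((B x)⁻¹ - (A x)⁻¹) + (B x - A x) with hF_def
  have hinv_bd : ∀ x, |(A x)⁻¹| ≤ t := by
    intro x
    rw [abs_of_nonneg (by positivity)]
    rw [inv_le_comm₀ (hApos x) ht] -- (A x)⁻¹ ≤ t ↔ t⁻¹ ≤ A x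
    simpa [one_div] using (hA x).1
  have hinvB_bd : ∀ x, |(B x)⁻¹| ≤ t := by
    intro x
    rw [abs_of_nonneg (by positivity)]
    rw [inv_le_comm₀ (hBpos x) ht]
    simpa [one_div] using (hB x).1
  have hiF : Integrable F Q := by
    apply ibdd Q inferInstance F (Mu * (t + t) + (s + s)) (by
      apply Measurable.add
      · exact hg0m.mul ((hBm.inv).sub (hAm.inv))
      · exact hBm.sub hAm)
    intro x
    have h1 : |g0 x * ((B x)⁻¹ - (A x)⁻¹)| ≤ Mu * (t + t) := by
      rw [abs_mul, abs_of_nonneg (hg0nn x)]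
      apply mul_le_mul (hg0 x).2 (le_trans (abs_sub _ _) (add_le_add (hinvB_bd x) (hinv_bd x)))
        (abs_nonneg _) hMu.le
    have h2 : |B x - A x| ≤ s + s := le_trans (abs_sub _ _)
      (add_le_add (by rw [abs_of_nonneg (hBpos x).le]; exact (hB x).2)
        (by rw [abs_of_nonneg (hApos x).le]; exact (hA x).2))
    calc |F x| ≤ |g0 x * ((B x)⁻¹ - (A x)⁻¹)| + |B x - A x| := abs_add_le _ _
    _ ≤ Mu * (t + t) + (s + s) := add_le_add h1 h2
  have sq_bdd : ∀ (u v : X → ℝ), (∀ x, 0 ≤ u x ∧ u x ≤ s) → (∀ x, 0 ≤ v x ∧ v x ≤ s) →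
      ∀ x, |(u x - v x)^2| ≤ s^2 := by
    intro u v hu hv x
    rw [abs_of_nonneg (sq_nonneg _)]
    have := (hu x).1; have := (hu x).2; have := (hv x).1; have := (hv x).2
    nlinarith
  have hiAB : Integrable (fun x => (A x - B x)^2) Q := by
    apply ibdd Q inferInstance _ (s^2) ((hAm.sub hBm).pow_const 2)
    exact sq_bdd A B (fun x => ⟨(hApos x).le, (hA x).2⟩) (fun x => ⟨(hBpos x).le, (hB x).2⟩)
  have hiBC : Integrable (fun x => (B x - C x)^2) Q := by
    apply ibdd Q inferInstance _ (s^2) ((hBm.sub hCm).pow_const 2)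
    exact sq_bdd B C (fun x => ⟨(hBpos x).le, (hB x).2⟩)
      (fun x => ⟨le_trans (by positivity) (hC x).1, (hC x).2⟩)
  have hiBA : Integrable (fun x => B x - A x) Q := by
    apply ibdd Q inferInstance _ (s + s) (hBm.sub hAm)
    intro x
    exact le_trans (abs_sub _ _) (add_le_add (by rw [abs_of_nonneg (hBpos x).le]; exact (hB x).2)
      (by rw [abs_of_nonneg (hApos x).le]; exact (hA x).2))
  have hig0 : Integrable (fun x => g0 x * ((B x)⁻¹ - (A x)⁻¹)) Q := by
    apply ibdd Q inferInstance _ (Mu * (t + t)) (hg0m.mul ((hBm.inv).sub (hAm.inv)))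
    intro x
    show |g0 x * ((B x)⁻¹ - (A x)⁻¹)| ≤ Mu * (t + t)
    rw [abs_mul, abs_of_nonneg (hg0nn x)]
    exact mul_le_mul (hg0 x).2 (le_trans (abs_sub _ _)
      (add_le_add (hinvB_bd x) (hinv_bd x))) (abs_nonneg _) hMu.le
  -- the three squared-distance integrals
  set I1 : ℝ := ∫ x, (A x - B x)^2 ∂Q with hI1_def
  set I2 : ℝ := ∫ x, (B x - C x)^2 ∂Q with hI2_def
  have hI1nn : 0 ≤ I1 := integral_nonneg fun x => sq_nonneg _
  have hI2nn : 0 ≤ I2 := integral_nonneg fun x => sq_nonneg _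
  -- squared closeness
  have hclose2 : I2 ≤ (1 / (4 * Ml * Mu))^2 * I1 := by
    have h := hclose
    have h2 : Real.sqrt I2 ≤ (1 / (4 * Ml * Mu)) * Real.sqrt I1 := h
    calc I2 = (Real.sqrt I2)^2 := (Real.sq_sqrt hI2nn).symm
    _ ≤ ((1 / (4 * Ml * Mu)) * Real.sqrt I1)^2 :=
        pow_le_pow_left₀ (Real.sqrt_nonneg _) h2 2
    _ = (1 / (4 * Ml * Mu))^2 * I1 := by rw [mul_pow, Real.sq_sqrt hI1nn]
  -- main integral inequality
  have hmain : ∫ x, F x ∂Q ≤ 4*t^4*s^3 * I2 - 3/(4*s) * I1 := by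
    have hmono : ∫ x, F x ∂Q ≤ ∫ x, (4*t^4*s^3*(B x - C x)^2 - 3/(4*s)*(A x - B x)^2) ∂Q := by
      apply integral_mono hiF ((hiBC.const_mul _).sub (hiAB.const_mul _))
      intro x
      have := sieve_ptwise s t (A x) (B x) (C x) hs ht (hA x).1 (hA x).2
        (hB x).1 (hB x).2 (hC x).1 (hC x).2
      simpa [hF_def, hC2 x] using (by
        calc F x = (C x)^2 * ((B x)⁻¹ - (A x)⁻¹) + (B x - A x) := by rw [hC2 x]
        _ ≤ 4*t^4*s^3*(B x - C x)^2 - 3/(4*s)*(A x - B x)^2 := by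
            have hthis := sieve_ptwise s t (A x) (B x) (C x) hs ht (hA x).1 (hA x).2
              (hB x).1 (hB x).2 (hC x).1 (hC x).2
            -- hthis : (C x)^2 * ((B x)⁻¹ - (A x)⁻¹) + (B x - A x) ≤ 4*t^4*s^3*(B x - C x)^2 - 3/(4*s)*(A x - B x)^2
            linarith [hthis])
    rw [integral_sub (hiBC.const_mul _) (hiAB.const_mul _),
      integral_const_mul, integral_const_mul] at hmono
    exact hmono
  have hLHS : (∫ x, ((B x)⁻¹ - (A x)⁻¹) ∂P) + ∫ x, (B x - A x) ∂Q = ∫ x, F x ∂Q := by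
    rw [keyP, ← integral_add hig0 hiBA]
  have hconst : 4*t^4*s^3 * ((1 / (4 * Ml * Mu))^2) = 1/(4*s) := by
    rw [← ht2, ← hs2]
    field_simp
  have hfinal : (∫ x, ((B x)⁻¹ - (A x)⁻¹) ∂P) + ∫ x, (B x - A x) ∂Q ≤ -(1/(2*s)) * I1 := by
    rw [hLHS]
    have h1 : 4*t^4*s^3 * I2 ≤ 4*t^4*s^3 * ((1 / (4 * Ml * Mu))^2 * I1) := by
      apply mul_le_mul_of_nonneg_left hclose2 (by positivity)
    calc ∫ x, F x ∂Q ≤ 4*t^4*s^3 * I2 - 3/(4*s) * I1 := hmain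
    _ ≤ 4*t^4*s^3 * ((1 / (4 * Ml * Mu))^2 * I1) - 3/(4*s) * I1 := by linarith
    _ = (4*t^4*s^3 * ((1 / (4 * Ml * Mu))^2)) * I1 - 3/(4*s) * I1 := by ring
    _ = -(1/(2*s)) * I1 := by rw [hconst]; field_simp; ring
  constructor
  · exact hfinal
  · -- split the integrals and rearrange
    have hiAinvP : Integrable (fun x => (A x)⁻¹) P := by
      apply ibdd P inferInstance _ t hAm.inv hinv_bd
    have hiBinvP : Integrable (fun x => (B x)⁻¹) P := by
      apply ibdd P inferInstance _ t hBm.inv hinvB_bd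
    have hiAQ : Integrable A Q := by
      apply ibdd Q inferInstance _ s hAm
      intro x; rw [abs_of_nonneg (hApos x).le]; exact (hA x).2
    have hiBQ : Integrable B Q := by
      apply ibdd Q inferInstance _ s hBm
      intro x; rw [abs_of_nonneg (hBpos x).le]; exact (hB x).2
    have e1 : ∫ x, ((B x)⁻¹ - (A x)⁻¹) ∂P = (∫ x, (B x)⁻¹ ∂P) - ∫ x, (A x)⁻¹ ∂P :=
      integral_sub hiBinvP hiAinvP
    have e2 : ∫ x, (B x - A x) ∂Q = (∫ x, B x ∂Q) - ∫ x, A x ∂Q :=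
      integral_sub hiBQ hiAQ
    rw [e1, e2] at hfinal
    linarith
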